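/- Let p and q be coprime integers with 1 < p < q. Then the nonzero coefficients of Δ_{p,q}(X) alternate in sign: if n < m are natural numbers such that the coefficients of X^n and X^m in Δ_{p,q} are both nonzero and the coefficient of X^k vanishes for all k with n < k < m, then the coefficient of X^n equals the negative of the coefficient of X^m. In particular Δ_{p,q}(X) = Σ_{i=0}^{d} (−1)^i X^{a_i} for some strictly increasing sequence of natural numbers a_0 < a_1 < ⋯ < a_d. -/

import Mathlib

open Polynomial

theorem torus_knot_alexander_alternating_signs (p q : ℕ) (hp : 1 < p) (hpq : p < q)
    (hcop : Nat.Coprime p q) (Δ : ℤ[X])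
    (hΔ : Δ * ((X ^ p - 1) * (X ^ q - 1)) = (X ^ (p * q) - 1) * (X - 1)) :
    (∀ n m : ℕ, n < m → Δ.coeff n ≠ 0 → Δ.coeff m ≠ 0 →
      (∀ k : ℕ, n < k → k < m → Δ.coeff k = 0) → Δ.coeff n = -Δ.coeff m) ∧
    ∃ d : ℕ, ∃ a : Fin (d + 1) → ℕ, StrictMono a ∧
      Δ = ∑ i : Fin (d + 1), (-1 : ℤ[X]) ^ (i : ℕ) * X ^ (a i) := by
  have hp0 : 0 < p := by omega
  have hq0 : 0 < q := by omega
  have hpq0 : 0 < p * q := Nat.mul_pos hp0 hq0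
  have hXp : (X : ℤ[X]) ^ p - 1 ≠ 0 := by simpa using X_pow_sub_C_ne_zero hp0 (1:ℤ)
  have hXq : (X : ℤ[X]) ^ q - 1 ≠ 0 := by simpa using X_pow_sub_C_ne_zero hq0 (1:ℤ)
  have hXpq : (X : ℤ[X]) ^ (p*q) - 1 ≠ 0 := by simpa using X_pow_sub_C_ne_zero hpq0 (1:ℤ)
  have hX1 : (X : ℤ[X]) - 1 ≠ 0 := by simpa using X_pow_sub_C_ne_zero one_pos (1:ℤ)
  set Q : ℤ[X] := (∑ a ∈ Finset.range q, X ^ (a * p)) * (∑ b ∈ Finset.range p, X ^ (b * q)) with hQdef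
  -- geometric sum identities
  have hg1 : (∑ a ∈ Finset.range q, (X:ℤ[X]) ^ (a * p)) * (X ^ p - 1) = X ^ (p*q) - 1 := by
    have h := geom_sum_mul ((X:ℤ[X]) ^ p) q
    have e : ∀ a : ℕ, (X:ℤ[X]) ^ (a * p) = ((X:ℤ[X]) ^ p) ^ a := fun a => by
      rw [← pow_mul, mul_comm]
    rw [Finset.sum_congr rfl fun a _ => e a, h, ← pow_mul]
  have hg2 : (∑ b ∈ Finset.range p, (X:ℤ[X]) ^ (b * q)) * (X ^ q - 1) = X ^ (p*q) - 1 := by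
    have h := geom_sum_mul ((X:ℤ[X]) ^ q) p
    have e : ∀ b : ℕ, (X:ℤ[X]) ^ (b * q) = ((X:ℤ[X]) ^ q) ^ b := fun b => by
      rw [← pow_mul, mul_comm]
    rw [Finset.sum_congr rfl fun b _ => e b, h, ← pow_mul, mul_comm q p]
  -- key identity
  have hQΔ : Δ * (X ^ (p*q) - 1) = Q * (X - 1) := by
    have hc : ((X:ℤ[X]) ^ p - 1) * ((X:ℤ[X]) ^ q - 1) ≠ 0 := mul_ne_zero hXp hXq
    apply mul_right_cancel₀ hc
    calc Δ * (X ^ (p*q) - 1) * ((X ^ p - 1) * (X ^ q - 1))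
        = (Δ * ((X ^ p - 1) * (X ^ q - 1))) * (X ^ (p*q) - 1) := by ring
      _ = (X ^ (p * q) - 1) * (X - 1) * (X ^ (p*q) - 1) := by rw [hΔ]
      _ = ((∑ a ∈ Finset.range q, (X:ℤ[X]) ^ (a * p)) * (X ^ p - 1)) *
            ((∑ b ∈ Finset.range p, (X:ℤ[X]) ^ (b * q)) * (X ^ q - 1)) * (X - 1) := by
          rw [hg1, hg2]; ring
      _ = Q * (X - 1) * ((X ^ p - 1) * (X ^ q - 1)) := by rw [hQdef]; ring
  -- Δ ≠ 0 and degree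
  have hΔne : Δ ≠ 0 := by
    intro h
    rw [h, zero_mul] at hΔ
    exact mul_ne_zero hXpq hX1 hΔ.symm
  have hdeg : Δ.natDegree < p * q := by
    have h1 : (Δ * ((X:ℤ[X]) ^ p - 1) * ((X:ℤ[X]) ^ q - 1)).natDegree
        = ((X:ℤ[X]) ^ (p * q) - 1).natDegree + ((X:ℤ[X]) - 1).natDegree := by
      rw [mul_assoc, hΔ, natDegree_mul hXpq hX1]
    rw [natDegree_mul (mul_ne_zero hΔne hXp) hXq, natDegree_mul hΔne hXp] at h1
    have e1 : ((X:ℤ[X]) ^ p - 1).natDegree = p := by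
      simpa using natDegree_X_pow_sub_C (n := p) (r := (1:ℤ))
    have e2 : ((X:ℤ[X]) ^ q - 1).natDegree = q := by
      simpa using natDegree_X_pow_sub_C (n := q) (r := (1:ℤ))
    have e3 : ((X:ℤ[X]) ^ (p*q) - 1).natDegree = p*q := by
      simpa using natDegree_X_pow_sub_C (n := p*q) (r := (1:ℤ))
    have e4 : ((X:ℤ[X]) - 1).natDegree = 1 := by
      simpa using natDegree_X_pow_sub_C (n := 1) (r := (1:ℤ))
    rw [e1, e2, e3, e4] at h1
    nlinarith [hp0, hq0, hp, hpq]
  -- Q coefficients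
  have hQcoeff : ∀ n : ℕ, Q.coeff n
      = ∑ a ∈ Finset.range q, ∑ b ∈ Finset.range p, if n = a * p + b * q then (1:ℤ) else 0 := by
    intro n
    rw [hQdef, Finset.sum_mul_sum]
    rw [finset_sum_coeff]
    refine Finset.sum_congr rfl fun a _ => ?_
    rw [finset_sum_coeff]
    refine Finset.sum_congr rfl fun b _ => ?_
    rw [← pow_add, coeff_X_pow]
  have hQ0 : Q.coeff 0 = 1 := by
    rw [hQcoeff]
    rw [Finset.sum_eq_single 0]
    · rw [Finset.sum_eq_single 0]
      · simp
      · intro b hb hb0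
        simp only [ite_eq_right_iff]
        intro h; exfalso
        have : b * q = 0 := by omega
        have := Nat.mul_eq_zero.mp this
        omega
      · intro h; exact absurd (Finset.mem_range.mpr hp0) h
    · intro a ha ha0
      apply Finset.sum_eq_zero
      intro b hb
      simp only [ite_eq_right_iff]
      intro h; exfalso
      have h1 : a * p = 0 := by omega
      have := Nat.mul_eq_zero.mp h1
      omega
    · intro h; exact absurd (Finset.mem_range.mpr hq0) h
  -- uniqueness of representations
  have huniq : ∀ a b a' b' : ℕ, a < q → a' < q →
      a * p + b * q = a' * p + b' * q → a = a' ∧ b = b' := by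
    have key : ∀ a b a' b' : ℕ, a ≤ a' → a' < q →
        a * p + b * q = a' * p + b' * q → a = a' ∧ b = b' := by
      intro a b a' b' hle ha' h
      obtain ⟨c, rfl⟩ := Nat.exists_eq_add_of_le hle
      have e1 : (a + c) * p = a * p + c * p := by ring
      have h' : b * q = c * p + b' * q := by omega
      have hbb : b' ≤ b := by
        by_contra hb
        push_neg at hb
        have : b * q < b' * q := (Nat.mul_lt_mul_right hq0).mpr hb
        omega
      obtain ⟨d, rfl⟩ := Nat.exists_eq_add_of_le hbb
      have e2 : (b' + d) * q = b' * q + d * q := by ring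
      have h'' : d * q = c * p := by omega
      have hdvd : q ∣ c * p := h'' ▸ Dvd.intro_left d rfl
      have hqc : q ∣ c := (Nat.Coprime.dvd_of_dvd_mul_right hcop.symm) hdvd
      have hc0' : c = 0 := by
        rcases Nat.eq_zero_or_pos c with h0 | h0
        · exact h0
        · exact absurd (Nat.le_of_dvd h0 hqc) (by omega)
      subst hc0'
      have hz : d * q = 0 := by omega
      have hd0 : d = 0 := by
        rcases Nat.mul_eq_zero.mp hz with h0 | h0
        · exact h0
        · omega
      omega
    intro a b a' b' ha ha' h
    rcases le_total a a' with hle | hle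
    · exact key a b a' b' hle ha' h
    · obtain ⟨h1, h2⟩ := key a' b' a b hle ha h.symm
      exact ⟨h1.symm, h2.symm⟩
  have hQ01 : ∀ n : ℕ, Q.coeff n = 0 ∨ Q.coeff n = 1 := by
    intro n
    rw [hQcoeff, ← Finset.sum_product']
    rw [Finset.sum_boole]
    have hcard : ((Finset.range q ×ˢ Finset.range p).filter
        (fun x => n = x.1 * p + x.2 * q)).card ≤ 1 := by
      apply Finset.card_le_one.mpr
      intro x hx y hy
      simp only [Finset.mem_filter, Finset.mem_product, Finset.mem_range] at hx hy
      obtain ⟨h1, h2⟩ := huniq x.1 x.2 y.1 y.2 hx.1.1 hy.1.1 (by omega)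
      exact Prod.ext h1 h2
    interval_cases h : ((Finset.range q ×ˢ Finset.range p).filter
        (fun x => n = x.1 * p + x.2 * q)).card
    · left; simp
    · right; simp [h]
  -- coefficient recurrence
  have hrec : ∀ n : ℕ, n < p * q → Δ.coeff n = Q.coeff n - (Q * X).coeff n := by
    intro n hn
    have h := congrArg (fun P : ℤ[X] => P.coeff n) hQΔ
    simp only [mul_sub, sub_mul, mul_one, coeff_sub] at h
    rw [coeff_mul_X_pow', if_neg (not_le.mpr hn)] at h
    linarith
  have hQX0 : (Q * X).coeff 0 = 0 := by
    rw [← pow_one (X : ℤ[X]), coeff_mul_X_pow']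
    simp
  have hQXs : ∀ n : ℕ, (Q * X).coeff (n + 1) = Q.coeff n := fun n => coeff_mul_X Q n
  have hc0 : Δ.coeff 0 = 1 := by
    rw [hrec 0 hpq0, hQX0, hQ0]; ring
  -- constancy of Q.coeff along gaps
  have hconst : ∀ n m : ℕ, n ≤ m → m < p * q → (∀ k, n < k → k ≤ m → Δ.coeff k = 0) →
      Q.coeff m = Q.coeff n := by
    intro n m hnm hm hz
    induction m with
    | zero =>
      have : n = 0 := Nat.le_zero.mp hnm
      rw [this]
    | succ m ih =>
      rcases Nat.lt_or_ge n (m + 1) with h | h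
      · have hz1 : Δ.coeff (m + 1) = 0 := hz (m + 1) h le_rfl
        have e := hrec (m + 1) hm
        rw [hQXs] at e
        have e2 : Q.coeff (m + 1) = Q.coeff m := by linarith
        rw [e2]
        exact ih (by omega) (by omega) (fun k hk hk' => hz k hk (by omega))
      · have : n = m + 1 := by omega
        rw [this]
  -- main alternation statement
  have hAlt : ∀ n m : ℕ, n < m → Δ.coeff n ≠ 0 → Δ.coeff m ≠ 0 →
      (∀ k : ℕ, n < k → k < m → Δ.coeff k = 0) → Δ.coeff n = -Δ.coeff m := by
    intro n m hnm hn hm hz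
    have hmlt : m < p * q := lt_of_le_of_lt (le_natDegree_of_ne_zero hm) hdeg
    have hnlt : n < p * q := by omega
    have hFm : Q.coeff (m - 1) = Q.coeff n :=
      hconst n (m - 1) (by omega) (by omega) (fun k hk hk' => hz k hk (by omega))
    have em : Δ.coeff m = Q.coeff m - Q.coeff n := by
      obtain ⟨m', rfl⟩ : ∃ m', m = m' + 1 := ⟨m - 1, by omega⟩
      have e := hrec (m' + 1) hmlt
      rw [hQXs] at e
      have hFm' : Q.coeff m' = Q.coeff n := by simpa using hFm
      rw [e, hFm']
    have en : Δ.coeff n = Q.coeff n - (Q * X).coeff n := hrec n hnlt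
    have hB : (Q * X).coeff n = 0 ∨ (Q * X).coeff n = 1 := by
      cases n with
      | zero => left; exact hQX0
      | succ n' => rw [hQXs]; exact hQ01 n'
    have hA := hQ01 n
    have hM := hQ01 m
    rcases hA with hA | hA <;> rcases hB with hB | hB <;> rcases hM with hM | hM <;> omega
  -- part 2
  have h0mem : 0 ∈ Δ.support := by
    rw [mem_support_iff, hc0]; exact one_ne_zero
  obtain ⟨d, hd⟩ : ∃ d, Δ.support.card = d + 1 := by
    have hne : Δ.support.card ≠ 0 := by
      intro h
      rw [Finset.card_eq_zero] at h
      rw [h] at h0mem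
      exact absurd h0mem (Finset.notMem_empty 0)
    exact ⟨Δ.support.card - 1, by omega⟩
  set e := Δ.support.orderIsoOfFin hd with he
  refine ⟨hAlt, d, fun i => (e i : ℕ), ?_, ?_⟩
  · intro i j hij
    exact Subtype.coe_lt_coe.mpr (e.strictMono hij)
  · have ha0 : ((e 0 : {x // x ∈ Δ.support}) : ℕ) = 0 := by
      have h1 : ((e (e.symm ⟨0, h0mem⟩) : {x // x ∈ Δ.support}) : ℕ) = 0 := by
        rw [OrderIso.apply_symm_apply]
      have h2 : ((e 0 : {x // x ∈ Δ.support}) : ℕ) ≤ (e (e.symm ⟨0, h0mem⟩) : ℕ) := by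
        exact_mod_cast Subtype.coe_le_coe.mpr (e.monotone (Fin.zero_le _))
      omega
    have hsign : ∀ k : ℕ, ∀ hk : k < d + 1, Δ.coeff ((e ⟨k, hk⟩ : ℕ)) = (-1) ^ k := by
      intro k
      induction k with
      | zero =>
        intro hk
        have h00 : (⟨0, hk⟩ : Fin (d + 1)) = 0 := rfl
        rw [h00, ha0, hc0, pow_zero]
      | succ k ih =>
        intro hk
        have hk' : k < d + 1 := by omega
        have hlt : ((e ⟨k, hk'⟩ : ℕ)) < ((e ⟨k + 1, hk⟩ : ℕ)) :=
          Subtype.coe_lt_coe.mpr (e.strictMono (by simp [Fin.lt_def]))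
        have hne1 : Δ.coeff ((e ⟨k, hk'⟩ : ℕ)) ≠ 0 := mem_support_iff.mp (e ⟨k, hk'⟩).2
        have hne2 : Δ.coeff ((e ⟨k + 1, hk⟩ : ℕ)) ≠ 0 := mem_support_iff.mp (e ⟨k + 1, hk⟩).2
        have hgap : ∀ j, ((e ⟨k, hk'⟩ : ℕ)) < j → j < ((e ⟨k + 1, hk⟩ : ℕ)) → Δ.coeff j = 0 := by
          intro j h1 h2
          by_contra hj
          have hjmem : j ∈ Δ.support := mem_support_iff.mpr hj
          set i := e.symm ⟨j, hjmem⟩ with hi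
          have hei : ((e i : ℕ)) = j := by rw [hi, OrderIso.apply_symm_apply]
          have l1 : (⟨k, hk'⟩ : Fin (d + 1)) < i := by
            rw [← e.lt_iff_lt, ← Subtype.coe_lt_coe, hei]
            exact h1
          have l2 : i < (⟨k + 1, hk⟩ : Fin (d + 1)) := by
            rw [← e.lt_iff_lt, ← Subtype.coe_lt_coe, hei]
            exact h2
          rw [Fin.lt_def] at l1 l2
          simp at l1 l2
          omega
        have halt := hAlt _ _ hlt hne1 hne2 hgap
        rw [ih hk'] at halt
        have hfin : Δ.coeff ((e ⟨k + 1, hk⟩ : ℕ)) = -(-1) ^ k := by linarith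
        rw [hfin, pow_succ]
        ring
    calc Δ = ∑ i ∈ Δ.support, Polynomial.monomial i (Δ.coeff i) := Δ.as_sum_support
      _ = ∑ j : {x // x ∈ Δ.support}, Polynomial.monomial (j : ℕ) (Δ.coeff (j : ℕ)) :=
          (Finset.sum_coe_sort Δ.support fun i => Polynomial.monomial i (Δ.coeff i)).symm
      _ = ∑ i : Fin (d + 1), Polynomial.monomial ((e i : ℕ)) (Δ.coeff ((e i : ℕ))) :=
          (Fintype.sum_equiv e.toEquiv _ _ (fun i => rfl)).symm
      _ = ∑ i : Fin (d + 1), (-1 : ℤ[X]) ^ (i : ℕ) * X ^ ((e i : ℕ)) := by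
          refine Finset.sum_congr rfl fun i _ => ?_
          rw [← C_mul_X_pow_eq_monomial]
          have hco : Δ.coeff ((e i : ℕ)) = (-1) ^ (i : ℕ) := by
            have := hsign i.val i.isLt
            simpa [Fin.eta] using this
          rw [hco]
          simp [map_pow]
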